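/- For every m ≥ 1 and every assignment of the variables x_1, …, x_{2m+1} to elements of S_7, the element x_1x_2 + x_2x_3 + ⋯ + x_{2m}x_{2m+1} + x_{2m+1}x_1 computed in S_7 equals x_1x_2 + ⋯ + x_{2m+1}x_1 + x_1x_2⋯x_{2m+1}; i.e., the odd-cycle identity U_m ≈ U_m + x_1⋯x_{2m+1} holds in S_7. -/

import Mathlib

/-- The 3-element ai-semiring `S₇ = {1, a, 0}`. -/
inductive S7 | one | a | zero
deriving DecidableEq

/-- Addition of `S₇`: idempotent, and all sums of distinct elements equal `0`. -/
def add7 : S7 → S7 → S7 := fun x y => if x = y then x else .zero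

/-- Multiplication of `S₇`: `1` is an identity, `a·a = a·0 = 0·0 = 0`. -/
def mul7 : S7 → S7 → S7
  | .one, y => y
  | x, .one => x
  | _, _ => .zero

/-- Sum of a nonempty list in a semigroup (`none` only for the empty list). -/
def sum7 : List S7 → Option S7
  | [] => none
  | s :: t => some (t.foldl add7 s)

/-- Swap `1` and `a`. -/
def swap7 : S7 → S7
  | .one => .a
  | .a => .one
  | .zero => .zero

lemma swap7_inv : Function.Involutive swap7 := by intro x; cases x <;> rfl

lemma add7_zero_left (p : S7) : add7 .zero p = .zero := by cases p <;> rfl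

lemma foldl_add7_zero (t : List S7) : t.foldl add7 .zero = .zero := by
  induction t with
  | nil => rfl
  | cons y t ih => simpa [add7_zero_left] using ih

lemma foldl_add7_all {s : S7} {t : List S7} (h : ∀ x ∈ t, x = s) :
    t.foldl add7 s = s := by
  induction t with
  | nil => rfl
  | cons y t ih =>
    have hy : y = s := h y (by simp)
    have h1 : add7 s y = s := by simp [add7, hy]
    simp only [List.foldl, h1]
    exact ih fun x hx => h x (by simp [hx])

lemma foldl_add7_not_all {s : S7} {t : List S7} (h : ¬ ∀ x ∈ t, x = s) :
    t.foldl add7 s = .zero := by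
  induction t with
  | nil => exact absurd (by simp) h
  | cons y t ih =>
    by_cases hy : y = s
    · subst hy
      have h1 : add7 y y = y := by simp [add7]
      simp only [List.foldl, h1]
      exact ih fun hall => h (by simpa using hall)
    · have h1 : add7 s y = .zero := by
        simp only [add7, if_neg (fun hs : s = y => hy hs.symm)]
      simp only [List.foldl, h1]
      exact foldl_add7_zero t

lemma mul7_eq_one {x y : S7} (h : mul7 x y = .one) : x = .one ∧ y = .one := by
  cases x <;> cases y <;> simp_all [mul7]

lemma mul7_eq_a {x y : S7} (h : mul7 x y = .a) : y = swap7 x ∧ x ≠ .zero := by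
  cases x <;> cases y <;> simp_all [mul7, swap7]

lemma foldr_mul7_one {l : List S7} (h : ∀ x ∈ l, x = S7.one) :
    l.foldr mul7 .one = .one := by
  induction l with
  | nil => rfl
  | cons y l ih =>
    have hy : y = S7.one := h y (by simp)
    have := ih fun x hx => h x (by simp [hx])
    simp only [List.foldr, hy, this]
    rfl

/-- For every `m ≥ 1`, the odd-cycle identity
`x₁x₂ + x₂x₃ + ⋯ + x₂ₘx₂ₘ₊₁ + x₂ₘ₊₁x₁ ≈ x₁x₂ + ⋯ + x₂ₘ₊₁x₁ + x₁x₂⋯x₂ₘ₊₁`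
holds in `S₇` (indices modulo `2m+1`; the full product is folded with the
multiplicative identity `1`). -/
theorem stmt17 (m : ℕ) (hm : 1 ≤ m) (φ : Fin (2 * m + 1) → S7) :
    sum7 ((List.finRange (2 * m + 1)).map (fun i => mul7 (φ i) (φ (i + 1)))) =
    sum7 ((List.finRange (2 * m + 1)).map (fun i => mul7 (φ i) (φ (i + 1))) ++
      [((List.finRange (2 * m + 1)).map φ).foldr mul7 S7.one]) := by
  set e : Fin (2*m+1) → S7 := fun i => mul7 (φ i) (φ (i + 1)) with he
  set p : S7 := ((List.finRange (2 * m + 1)).map φ).foldr mul7 S7.one with hp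
  set L : List S7 := (List.finRange (2*m+1)).map e with hL
  have hLne : L ≠ [] := by
    simp [hL, ← List.length_pos_iff]
  obtain ⟨h, t, hht⟩ := List.exists_cons_of_ne_nil hLne
  have hmemL : ∀ i : Fin (2*m+1), e i ∈ L := by
    intro i; simp [hL]
  rw [hht]
  show some (t.foldl add7 h) = sum7 ((h :: t) ++ [p])
  have hsplit : sum7 ((h :: t) ++ [p]) = some (add7 (t.foldl add7 h) p) := by
    simp [sum7, List.foldl_append]
  rw [hsplit]
  suffices hS : add7 (t.foldl add7 h) p = t.foldl add7 h by rw [hS]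
  by_cases hA : ∀ i, φ i = S7.one
  · have hallL : ∀ x ∈ L, x = S7.one := by
      rintro x hx
      rw [hL] at hx
      obtain ⟨i, -, rfl⟩ := List.mem_map.1 hx
      simp [he, hA]
      rfl
    have hh : h = S7.one := hallL h (hht ▸ by simp)
    have hSone : t.foldl add7 h = S7.one := by
      rw [hh]
      exact foldl_add7_all fun x hx => hallL x (hht ▸ by simp [hx])
    have hpone : p = S7.one := by
      rw [hp]
      apply foldr_mul7_one
      intro x hx
      obtain ⟨i, -, rfl⟩ := List.mem_map.1 hx
      exact hA i
    rw [hSone, hpone]; rfl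
  · suffices hS0 : t.foldl add7 h = S7.zero by rw [hS0, add7_zero_left]
    by_cases hall : ∀ x ∈ t, x = h
    · have hfold := foldl_add7_all hall
      have hallL : ∀ x ∈ L, x = h := by
        rw [hht]
        rintro x hx
        rcases List.mem_cons.1 hx with rfl | hx
        · rfl
        · exact hall x hx
      have he' : ∀ i, e i = h := fun i => hallL (e i) (hmemL i)
      cases h with
      | one =>
        exact absurd (fun i => (mul7_eq_one (he' i)).1) hA
      | zero => exact hfold
      | a =>
        exfalso
        have step : ∀ i, φ (i + 1) = swap7 (φ i) ∧ φ i ≠ S7.zero :=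
          fun i => mul7_eq_a (he' i)
        open Fin.NatCast in
        have iter : ∀ (k : ℕ) (i : Fin (2*m+1)),
            φ (i + (k : Fin (2*m+1))) = swap7^[k] (φ i) := by
          intro k
          induction k with
          | zero => intro i; simp
          | succ k ih =>
            intro i
            have hc : ((k+1 : ℕ) : Fin (2*m+1)) = (k : Fin (2*m+1)) + 1 := by
              push_cast; ring
            rw [hc, ← add_assoc, (step (i + (k : Fin (2*m+1)))).1, ih,
              Function.iterate_succ_apply']
        open Fin.NatCast in
        have hfix : φ 0 = swap7^[2*m+1] (φ 0) := by
          have := iter (2*m+1) 0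
          rwa [Fin.natCast_self, add_zero] at this
        have hodd : swap7^[2*m+1] = swap7 :=
          swap7_inv.iterate_odd ⟨m, by ring⟩
        rw [hodd] at hfix
        have hne := (step 0).2
        cases h0 : φ 0 <;> rw [h0] at hfix hne <;> simp [swap7] at hfix hne
    · exact foldl_add7_not_all hall
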